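/- For t > 0 and (μ₀, ν₀) nonnegative tempered measures on ℝ, the function (x, y) ↦ S̃_t(μ₀ ⊗ ν₀)(x, y) := ∫∫ p̃_t(x, y; a, b) μ₀(da) ν₀(db) is continuous on ℝ² and vanishes on the diagonal {x = y}. -/

import Mathlib

open MeasureTheory

/-- The two-dimensional Gaussian heat kernel `p_t²(u,v) = (2πt)⁻¹ exp(-(u²+v²)/(2t))`. -/
noncomputable def heatKernel2 (t u v : ℝ) : ℝ :=
  (2 * Real.pi * t)⁻¹ * Real.exp (-(u ^ 2 + v ^ 2) / (2 * t))

/-- The transition density of planar Brownian motion killed on the diagonal. -/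
noncomputable def ptilde (t x y a b : ℝ) : ℝ :=
  ((if x < y ∧ a < b then (1 : ℝ) else 0) + (if y < x ∧ b < a then (1 : ℝ) else 0)) *
    (heatKernel2 t (x - a) (y - b) - heatKernel2 t (x - b) (y - a))

lemma hk_nonneg (t u v : ℝ) (ht : 0 < t) : 0 ≤ heatKernel2 t u v := by
  unfold heatKernel2
  have := Real.pi_pos
  positivity

lemma hk_symm (t u v : ℝ) : heatKernel2 t u v = heatKernel2 t v u := by
  unfold heatKernel2; rw [add_comm (u^2)]

lemma hk_le (t u v : ℝ) (ht : 0 < t) :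
    heatKernel2 t u v ≤ (2 * Real.pi * t)⁻¹ * Real.exp (t - |u| - |v|) := by
  have hπ := Real.pi_pos
  unfold heatKernel2
  apply mul_le_mul_of_nonneg_left (Real.exp_le_exp.mpr ?_) (by positivity)
  rw [div_le_iff₀ (by positivity)]
  nlinarith [sq_nonneg (|u| - t), sq_nonneg (|v| - t), sq_abs u, sq_abs v]

lemma ind_mem (x y a b : ℝ) :
    ((if x < y ∧ a < b then (1 : ℝ) else 0) + (if y < x ∧ b < a then (1 : ℝ) else 0)) = 0 ∨
    ((if x < y ∧ a < b then (1 : ℝ) else 0) + (if y < x ∧ b < a then (1 : ℝ) else 0)) = 1 := by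
  by_cases h1 : x < y ∧ a < b
  · by_cases h2 : y < x ∧ b < a
    · exact absurd h2.1 h1.1.asymm
    · simp [h1, h2]
  · by_cases h2 : y < x ∧ b < a <;> simp [h1, h2]

lemma ptilde_abs_le_diff (t x y a b : ℝ) :
    |ptilde t x y a b| ≤ |heatKernel2 t (x - a) (y - b) - heatKernel2 t (x - b) (y - a)| := by
  unfold ptilde
  rw [abs_mul]
  rcases ind_mem x y a b with h | h <;> rw [h] <;> simp [abs_nonneg]

lemma ptilde_bound (t x y a b : ℝ) (ht : 0 < t) :
    |ptilde t x y a b| ≤ 2 * (2 * Real.pi * t)⁻¹ * Real.exp t *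
      Real.exp (|x| + |y|) * Real.exp (-|a|) * Real.exp (-|b|) := by
  have hπ := Real.pi_pos
  have hK : (0:ℝ) < (2 * Real.pi * t)⁻¹ := by positivity
  have key : ∀ u v c d : ℝ, heatKernel2 t (u - c) (v - d) ≤
      (2 * Real.pi * t)⁻¹ * (Real.exp t * Real.exp (|u| + |v|) * Real.exp (-|c|) * Real.exp (-|d|)) := by
    intro u v c d
    refine (hk_le t (u - c) (v - d) ht).trans ?_
    rw [← Real.exp_add, ← Real.exp_add, ← Real.exp_add]
    apply mul_le_mul_of_nonneg_left (Real.exp_le_exp.mpr ?_) hK.le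
    have h1 : |c| - |u| ≤ |u - c| := by rw [abs_sub_comm]; exact abs_sub_abs_le_abs_sub c u
    have h2 : |d| - |v| ≤ |v - d| := by rw [abs_sub_comm]; exact abs_sub_abs_le_abs_sub d v
    linarith
  calc |ptilde t x y a b| ≤ |heatKernel2 t (x - a) (y - b) - heatKernel2 t (x - b) (y - a)| :=
        ptilde_abs_le_diff t x y a b
    _ ≤ heatKernel2 t (x - a) (y - b) + heatKernel2 t (x - b) (y - a) := by
        refine (abs_sub _ _).trans ?_
        rw [abs_of_nonneg (hk_nonneg _ _ _ ht), abs_of_nonneg (hk_nonneg _ _ _ ht)]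
    _ ≤ 2 * (2 * Real.pi * t)⁻¹ * Real.exp t * Real.exp (|x| + |y|) * Real.exp (-|a|) * Real.exp (-|b|) := by
        have k1 := key x y a b
        have k2 := key x y b a
        nlinarith [Real.exp_pos t, Real.exp_pos (|x| + |y|), Real.exp_pos (-|a|), Real.exp_pos (-|b|)]

lemma ptilde_cont4 (t : ℝ) :
    Continuous fun p : ℝ × ℝ × ℝ × ℝ => ptilde t p.1 p.2.1 p.2.2.1 p.2.2.2 := by
  have hg : Continuous fun p : ℝ × ℝ × ℝ × ℝ =>
      heatKernel2 t (p.1 - p.2.2.1) (p.2.1 - p.2.2.2) -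
        heatKernel2 t (p.1 - p.2.2.2) (p.2.1 - p.2.2.1) := by
    unfold heatKernel2
    fun_prop
  rw [continuous_iff_continuousAt]
  rintro ⟨x, y, a, b⟩
  by_cases hd : x = y ∨ a = b
  · -- on the "diagonal": squeeze to 0
    have hg0 : heatKernel2 t (x - a) (y - b) - heatKernel2 t (x - b) (y - a) = 0 := by
      rcases hd with h | h
      · subst h; rw [hk_symm, sub_self]
      · subst h; rw [sub_self]
    have hval : ptilde t x y a b = 0 := by unfold ptilde; rw [hg0, mul_zero]
    have habs : ∀ q : ℝ × ℝ × ℝ × ℝ,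
        ‖ptilde t q.1 q.2.1 q.2.2.1 q.2.2.2‖ ≤
          |heatKernel2 t (q.1 - q.2.2.1) (q.2.1 - q.2.2.2) -
            heatKernel2 t (q.1 - q.2.2.2) (q.2.1 - q.2.2.1)| :=
      fun q => ptilde_abs_le_diff t _ _ _ _
    have htend : Filter.Tendsto
        (fun q : ℝ × ℝ × ℝ × ℝ => |heatKernel2 t (q.1 - q.2.2.1) (q.2.1 - q.2.2.2) -
            heatKernel2 t (q.1 - q.2.2.2) (q.2.1 - q.2.2.1)|)
        (nhds (x, y, a, b)) (nhds 0) := by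
      have h0 := (hg.abs).tendsto (x, y, a, b)
      simpa [hg0] using h0
    have : Filter.Tendsto (fun q : ℝ × ℝ × ℝ × ℝ => ptilde t q.1 q.2.1 q.2.2.1 q.2.2.2)
        (nhds (x, y, a, b)) (nhds 0) := squeeze_zero_norm habs htend
    rw [ContinuousAt, hval]
    exact this
  · push_neg at hd
    obtain ⟨hxy, hab⟩ := hd
    have e1 : ∀ᶠ q : ℝ × ℝ × ℝ × ℝ in nhds (x, y, a, b),
        ((q.1 < q.2.1) ↔ (x < y)) ∧ ((q.2.1 < q.1) ↔ (y < x)) := by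
      rcases Ne.lt_or_gt hxy with h | h
      · have ho : IsOpen {q : ℝ × ℝ × ℝ × ℝ | q.1 < q.2.1} :=
          isOpen_lt continuous_fst (continuous_snd.fst)
        filter_upwards [ho.mem_nhds h] with q hq
        exact ⟨iff_of_true hq h, iff_of_false hq.asymm h.asymm⟩
      · have ho : IsOpen {q : ℝ × ℝ × ℝ × ℝ | q.2.1 < q.1} :=
          isOpen_lt (continuous_snd.fst) continuous_fst
        filter_upwards [ho.mem_nhds h] with q hq
        exact ⟨iff_of_false hq.asymm h.asymm, iff_of_true hq h⟩
    have e2 : ∀ᶠ q : ℝ × ℝ × ℝ × ℝ in nhds (x, y, a, b),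
        ((q.2.2.1 < q.2.2.2) ↔ (a < b)) ∧ ((q.2.2.2 < q.2.2.1) ↔ (b < a)) := by
      rcases Ne.lt_or_gt hab with h | h
      · have ho : IsOpen {q : ℝ × ℝ × ℝ × ℝ | q.2.2.1 < q.2.2.2} :=
          isOpen_lt (continuous_snd.snd.fst) (continuous_snd.snd.snd)
        filter_upwards [ho.mem_nhds h] with q hq
        exact ⟨iff_of_true hq h, iff_of_false hq.asymm h.asymm⟩
      · have ho : IsOpen {q : ℝ × ℝ × ℝ × ℝ | q.2.2.2 < q.2.2.1} :=
          isOpen_lt (continuous_snd.snd.snd) (continuous_snd.snd.fst)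
        filter_upwards [ho.mem_nhds h] with q hq
        exact ⟨iff_of_false hq.asymm h.asymm, iff_of_true hq h⟩
    have heq : (fun q : ℝ × ℝ × ℝ × ℝ => ptilde t q.1 q.2.1 q.2.2.1 q.2.2.2) =ᶠ[nhds (x, y, a, b)]
        (fun q : ℝ × ℝ × ℝ × ℝ =>
          ((if x < y ∧ a < b then (1 : ℝ) else 0) + (if y < x ∧ b < a then (1 : ℝ) else 0)) *
            (heatKernel2 t (q.1 - q.2.2.1) (q.2.1 - q.2.2.2) -
              heatKernel2 t (q.1 - q.2.2.2) (q.2.1 - q.2.2.1))) := by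
      filter_upwards [e1, e2] with q hq1 hq2
      unfold ptilde
      simp only [hq1.1, hq1.2, hq2.1, hq2.2]
    exact ContinuousAt.congr ((continuous_const.mul hg).continuousAt) heq.symm

lemma ptilde_cont_xy (t a b : ℝ) : Continuous fun q : ℝ × ℝ => ptilde t q.1 q.2 a b := by
  have m : Continuous fun q : ℝ × ℝ => ((q.1, q.2, a, b) : ℝ × ℝ × ℝ × ℝ) := by fun_prop
  exact (ptilde_cont4 t).comp m

lemma ptilde_cont_a (t x y b : ℝ) : Continuous fun a : ℝ => ptilde t x y a b := by
  have m : Continuous fun a : ℝ => ((x, y, a, b) : ℝ × ℝ × ℝ × ℝ) := by fun_prop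
  exact (ptilde_cont4 t).comp m

lemma ptilde_cont_b (t x y a : ℝ) : Continuous fun b : ℝ => ptilde t x y a b := by
  have m : Continuous fun b : ℝ => ((x, y, a, b) : ℝ × ℝ × ℝ × ℝ) := by fun_prop
  exact (ptilde_cont4 t).comp m

/-- For `t > 0` and nonnegative tempered measures `μ₀, ν₀` on `ℝ`, the function
`(x,y) ↦ S̃_t(μ₀ ⊗ ν₀)(x,y) = ∬ p̃_t(x,y;a,b) μ₀(da) ν₀(db)` is continuous on `ℝ²`
and vanishes on the diagonal. -/
theorem killed_semigroup_measure_continuous_vanishing_diagonal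
    (t : ℝ) (ht : 0 < t) (μ₀ ν₀ : Measure ℝ)
    (htemμ : ∀ lam > (0 : ℝ), Integrable (fun z => Real.exp (-lam * |z|)) μ₀)
    (htemν : ∀ lam > (0 : ℝ), Integrable (fun z => Real.exp (-lam * |z|)) ν₀) :
    Continuous (fun q : ℝ × ℝ => ∫ a, ∫ b, ptilde t q.1 q.2 a b ∂ν₀ ∂μ₀) ∧
      ∀ x : ℝ, (∫ a, ∫ b, ptilde t x x a b ∂ν₀ ∂μ₀) = 0 := by
  have hπ := Real.pi_pos
  have hK : (0:ℝ) < 2 * (2 * Real.pi * t)⁻¹ * Real.exp t := by positivity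
  set K : ℝ := 2 * (2 * Real.pi * t)⁻¹ * Real.exp t with hKdef
  have hμ1 : Integrable (fun a => Real.exp (-|a|)) μ₀ := by simpa using htemμ 1 one_pos
  have hν1 : Integrable (fun b => Real.exp (-|b|)) ν₀ := by simpa using htemν 1 one_pos
  set Iν : ℝ := ∫ b, Real.exp (-|b|) ∂ν₀ with hIdef
  have hIν : 0 ≤ Iν := integral_nonneg fun b => (Real.exp_pos _).le
  constructor
  · rw [continuous_iff_continuousAt]
    rintro ⟨x₀, y₀⟩
    set E : ℝ := Real.exp (|x₀| + |y₀| + 2) with hEdef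
    have hev : ∀ᶠ q : ℝ × ℝ in nhds (x₀, y₀), |q.1| + |q.2| ≤ |x₀| + |y₀| + 2 := by
      have h1 : Filter.Tendsto (fun q : ℝ × ℝ => |q.1| + |q.2|) (nhds (x₀, y₀))
          (nhds (|x₀| + |y₀|)) := by
        have := ((continuous_fst.abs).add (continuous_snd.abs)).tendsto (x₀, y₀)
        exact this
      exact h1.eventually_le_const (by linarith)
    apply continuousAt_of_dominated (bound := fun a => K * E * Iν * Real.exp (-|a|))
    · apply Filter.Eventually.of_forall
      intro q
      apply Continuous.aestronglyMeasurable
      apply continuous_of_dominated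
        (bound := fun b => K * Real.exp (|q.1| + |q.2|) * Real.exp (-|b|))
      · intro a
        exact (ptilde_cont_b t q.1 q.2 a).aestronglyMeasurable
      · intro a
        apply Filter.Eventually.of_forall; intro b
        simp only [Real.norm_eq_abs]
        have hb := ptilde_bound t q.1 q.2 a b ht
        rw [← hKdef] at hb
        have h2 : Real.exp (-|a|) ≤ 1 := Real.exp_le_one_iff.mpr (neg_nonpos.mpr (abs_nonneg a))
        calc |ptilde t q.1 q.2 a b|
            ≤ K * Real.exp (|q.1| + |q.2|) * Real.exp (-|a|) * Real.exp (-|b|) := hb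
          _ ≤ K * Real.exp (|q.1| + |q.2|) * 1 * Real.exp (-|b|) := by
              gcongr
          _ = K * Real.exp (|q.1| + |q.2|) * Real.exp (-|b|) := by ring
      · exact hν1.const_mul _
      · apply Filter.Eventually.of_forall; intro b
        exact ptilde_cont_a t q.1 q.2 b
    · filter_upwards [hev] with q hq
      apply Filter.Eventually.of_forall; intro a
      calc ‖∫ b, ptilde t q.1 q.2 a b ∂ν₀‖ ≤ ∫ b, ‖ptilde t q.1 q.2 a b‖ ∂ν₀ :=
            norm_integral_le_integral_norm _
        _ ≤ ∫ b, (K * E * Real.exp (-|a|)) * Real.exp (-|b|) ∂ν₀ := by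
            apply integral_mono_of_nonneg (Filter.Eventually.of_forall fun b => norm_nonneg _)
              (hν1.const_mul _)
            apply Filter.Eventually.of_forall; intro b
            simp only [Real.norm_eq_abs]
            have hb := ptilde_bound t q.1 q.2 a b ht
            rw [← hKdef] at hb
            have h1 : Real.exp (|q.1| + |q.2|) ≤ E := Real.exp_le_exp.mpr hq
            calc |ptilde t q.1 q.2 a b|
                ≤ K * Real.exp (|q.1| + |q.2|) * Real.exp (-|a|) * Real.exp (-|b|) := hb
              _ ≤ K * E * Real.exp (-|a|) * Real.exp (-|b|) := by gcongr
              _ = K * E * Real.exp (-|a|) * Real.exp (-|b|) := by ring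
        _ = K * E * Iν * Real.exp (-|a|) := by
            rw [integral_const_mul]; rw [hIdef]; ring
    · exact hμ1.const_mul _
    · apply Filter.Eventually.of_forall; intro a
      apply continuousAt_of_dominated (bound := fun b => K * E * Real.exp (-|b|))
      · apply Filter.Eventually.of_forall; intro q
        exact (ptilde_cont_b t q.1 q.2 a).aestronglyMeasurable
      · filter_upwards [hev] with q hq
        apply Filter.Eventually.of_forall; intro b
        simp only [Real.norm_eq_abs]
        have hb := ptilde_bound t q.1 q.2 a b ht
        rw [← hKdef] at hb
        have h1 : Real.exp (|q.1| + |q.2|) ≤ E := Real.exp_le_exp.mpr hq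
        have h2 : Real.exp (-|a|) ≤ 1 := Real.exp_le_one_iff.mpr (neg_nonpos.mpr (abs_nonneg a))
        calc |ptilde t q.1 q.2 a b|
            ≤ K * Real.exp (|q.1| + |q.2|) * Real.exp (-|a|) * Real.exp (-|b|) := hb
          _ ≤ K * E * 1 * Real.exp (-|b|) := by gcongr
          _ = K * E * Real.exp (-|b|) := by ring
      · exact hν1.const_mul _
      · apply Filter.Eventually.of_forall; intro b
        exact (ptilde_cont_xy t a b).continuousAt
  · intro x
    have hz : ∀ a b : ℝ, ptilde t x x a b = 0 := by
      intro a b; unfold ptilde; simp [lt_irrefl]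
    simp [hz]
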